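/- If β > β₀, then p μ₁ k₀^{p-1} < 1 and p μ₂ l₀^{p-1} < 1. -/

import Mathlib

open Real Set

section helpers

private lemma gmono' {q A s t : ℝ} (hq0 : 0 < q) (hA : 0 ≤ A)
    (hs : 0 < s) (hst : s < t) (hcond : A * (1 - q) ≤ (1 + q) * (s * s)) :
    A * s ^ (q - 1) + s ^ (q + 1) < A * t ^ (q - 1) + t ^ (q + 1) := by
  set G : ℝ → ℝ := fun x => A * x ^ (q - 1) + x ^ (q + 1) with hG
  have hder : ∀ x : ℝ, 0 < x → HasDerivAt G
      (A * ((q - 1) * x ^ (q - 1 - 1)) + (q + 1) * x ^ (q + 1 - 1)) x := by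
    intro x hx
    exact ((Real.hasDerivAt_rpow_const (Or.inl hx.ne')).const_mul A).add
      (Real.hasDerivAt_rpow_const (Or.inl hx.ne'))
  have hmono : StrictMonoOn G (Icc s t) := by
    apply strictMonoOn_of_deriv_pos (convex_Icc s t)
    · intro x hx
      exact (hder x (lt_of_lt_of_le hs hx.1)).continuousAt.continuousWithinAt
    · intro x hx
      rw [interior_Icc] at hx
      have hx0 : 0 < x := hs.trans hx.1
      rw [(hder x hx0).deriv]
      have h1 : x ^ (q + 1 - 1) = x ^ (q - 1 - 1) * (x * x) := by
        rw [show q + 1 - 1 = (q - 1 - 1) + 1 + 1 by ring, Real.rpow_add hx0,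
          Real.rpow_add hx0, Real.rpow_one]
        ring
      have hxq : 0 < x ^ (q - 1 - 1) := Real.rpow_pos_of_pos hx0 _
      have hx2 : (1 + q) * (s * s) < (1 + q) * (x * x) := by
        nlinarith [mul_pos (sub_pos.2 hx.1) (by linarith : (0:ℝ) < x + s)]
      rw [h1]
      nlinarith [hxq]
  exact hmono (left_mem_Icc.2 hst.le) (right_mem_Icc.2 hst.le) hst

private lemma core' {q μ₁ μ₂ β a b σ₀ : ℝ} (hq0 : 0 < q) (hq1 : q < 1)
    (hμ₁ : 0 < μ₁) (hβ : 0 < β)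
    (ha : a = (1 - q) * μ₁ / ((1 + q) * β)) (hab : a < b)
    (hFa : μ₁ * a ^ q + β * a ^ (q + 1) - μ₂ * a - β < 0)
    (hFb : 0 < μ₁ * b ^ q + β * b ^ (q + 1) - μ₂ * b - β)
    (hF0 : μ₁ * σ₀ ^ q + β * σ₀ ^ (q + 1) - μ₂ * σ₀ - β = 0)
    (hmax : ∀ σ : ℝ, 0 < σ → μ₁ * σ ^ q + β * σ ^ (q + 1) - μ₂ * σ - β = 0 → σ ≤ σ₀) :
    a < σ₀ ∧ σ₀ < b := by
  have ha0 : 0 < a := by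
    rw [ha]
    exact div_pos (mul_pos (by linarith) hμ₁) (mul_pos (by linarith) hβ)
  have hb0 : 0 < b := ha0.trans hab
  set F : ℝ → ℝ := fun σ => μ₁ * σ ^ q + β * σ ^ (q + 1) - μ₂ * σ - β with hFdef
  set F' : ℝ → ℝ := fun σ => μ₁ * (q * σ ^ (q - 1)) + β * ((q + 1) * σ ^ (q + 1 - 1)) - μ₂
    with hF'def
  have hder : ∀ x : ℝ, 0 < x → HasDerivAt F (F' x) x := by
    intro x hx
    have h1 : HasDerivAt (fun σ : ℝ => μ₁ * σ ^ q + β * σ ^ (q + 1) - μ₂ * σ - β)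
        (μ₁ * (q * x ^ (q - 1)) + β * ((q + 1) * x ^ (q + 1 - 1)) - μ₂ * 1) x :=
      ((((Real.hasDerivAt_rpow_const (Or.inl hx.ne')).const_mul μ₁).add
        ((Real.hasDerivAt_rpow_const (Or.inl hx.ne')).const_mul β)).sub
        ((hasDerivAt_id' x).const_mul μ₂)).sub_const β
    rw [hFdef, hF'def]
    simpa using h1
  have hder2 : ∀ x : ℝ, 0 < x → HasDerivAt F'
      (μ₁ * (q * ((q - 1) * x ^ (q - 1 - 1))) + β * ((q + 1) * ((q + 1 - 1) * x ^ (q + 1 - 1 - 1)))) x := by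
    intro x hx
    have h1 : HasDerivAt (fun σ : ℝ => μ₁ * (q * σ ^ (q - 1)) + β * ((q + 1) * σ ^ (q + 1 - 1)) - μ₂)
        (μ₁ * (q * ((q - 1) * x ^ (q - 1 - 1))) + β * ((q + 1) * ((q + 1 - 1) * x ^ (q + 1 - 1 - 1)))) x :=
      ((((Real.hasDerivAt_rpow_const (Or.inl hx.ne')).const_mul q).const_mul μ₁).add
        (((Real.hasDerivAt_rpow_const (Or.inl hx.ne')).const_mul (q+1)).const_mul β)).sub_const μ₂
    rw [hF'def]
    exact h1
  have hmono : MonotoneOn F' (Ici a) := by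
    apply monotoneOn_of_deriv_nonneg (convex_Ici a)
    · intro x hx
      exact (hder2 x (lt_of_lt_of_le ha0 hx)).continuousAt.continuousWithinAt
    · intro x hx
      rw [interior_Ici] at hx
      exact (hder2 x (ha0.trans hx)).differentiableAt.differentiableWithinAt
    · intro x hx
      rw [interior_Ici] at hx
      have hx0 : 0 < x := ha0.trans hx
      rw [(hder2 x hx0).deriv]
      have h1 : x ^ (q + 1 - 1 - 1) = x ^ (q - 1 - 1) * x := by
        rw [show q + 1 - 1 - 1 = (q - 1 - 1) + 1 by ring, Real.rpow_add hx0, Real.rpow_one]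
      have hxq : 0 < x ^ (q - 1 - 1) := Real.rpow_pos_of_pos hx0 _
      have hxa : (1 - q) * μ₁ ≤ (1 + q) * β * x := by
        have haeq : (1 + q) * β * a = (1 - q) * μ₁ := by
          rw [ha]; field_simp
        nlinarith [mul_pos (mul_pos (by linarith : (0:ℝ) < 1 + q) hβ) (sub_pos.2 hx)]
      rw [h1]
      nlinarith [mul_nonneg (mul_nonneg hq0.le hxq.le)
        (by linarith : (0:ℝ) ≤ (1 + q) * β * x - (1 - q) * μ₁)]
  have hcont : ∀ u v : ℝ, 0 < u → ContinuousOn F (Icc u v) := by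
    intro u v hu x hx
    exact (hder x (lt_of_lt_of_le hu hx.1)).continuousAt.continuousWithinAt
  have part1 : a < σ₀ := by
    by_contra hcon
    push_neg at hcon
    have h0mem : (0:ℝ) ∈ Ioo (F a) (F b) := ⟨hFa, hFb⟩
    obtain ⟨σ₂, hσ₂mem, hσ₂⟩ := intermediate_value_Ioo hab.le (hcont a b ha0) h0mem
    have hle := hmax σ₂ (ha0.trans hσ₂mem.1) hσ₂
    linarith [hσ₂mem.1]
  refine ⟨part1, ?_⟩
  by_contra hcon
  push_neg at hcon
  rcases eq_or_lt_of_le hcon with heq | hlt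
  · rw [← heq] at hF0; linarith
  · obtain ⟨c, hcmem, hc⟩ := exists_hasDerivAt_eq_slope F F' hab (hcont a b ha0)
      (fun x hx => hder x (ha0.trans hx.1))
    obtain ⟨c', hc'mem, hc'⟩ := exists_hasDerivAt_eq_slope F F' hlt (hcont b σ₀ hb0)
      (fun x hx => hder x (hb0.trans hx.1))
    have h1 : 0 < F' c := by
      rw [hc]
      apply div_pos (by simp only [hFdef]; linarith) (by linarith)
    have h2 : F' c' < 0 := by
      rw [hc']
      apply div_neg_of_neg_of_pos (by simp only [hFdef]; linarith) (by linarith)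
    have h3 := hmono (mem_Ici.2 hcmem.1.le) (mem_Ici.2 (by linarith [hcmem.2, hc'mem.1] : a ≤ c'))
      (by linarith [hcmem.2, hc'mem.1] : c ≤ c')
    linarith

end helpers

set_option maxHeartbeats 800000 in
theorem stmt_7 (N : ℕ) (hN : 5 ≤ N) (p : ℝ) (hp : p = (N : ℝ) / ((N : ℝ) - 2))
    (μ₁ μ₂ β : ℝ) (hμ₁ : 0 < μ₁) (hμ₂ : 0 < μ₂) (hβ : 0 < β)
    (β₀ : ℝ) (hβ₀ge : (p - 1) * max μ₁ μ₂ ≤ β₀)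
    (hβ₀eq : (p - 1) * μ₁ * μ₂ * β₀ ^ (2 / p - 2) + β₀ ^ (2 / p) =
      p * (p - 1) ^ (2 / p - 1) * max (μ₁ ^ (2 / p)) (μ₂ ^ (2 / p)))
    (hββ₀ : β₀ < β)
    (k₀ l₀ : ℝ) (hk₀ : 0 < k₀) (hl₀ : 0 < l₀)
    (he₁ : μ₁ * k₀ ^ (p - 1) + β * k₀ ^ (p / 2 - 1) * l₀ ^ (p / 2) = 1)
    (he₂ : μ₂ * l₀ ^ (p - 1) + β * l₀ ^ (p / 2 - 1) * k₀ ^ (p / 2) = 1)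
    (hmin : ∀ k l : ℝ, 0 < k → 0 < l →
      μ₁ * k ^ (p - 1) + β * k ^ (p / 2 - 1) * l ^ (p / 2) = 1 →
      μ₂ * l ^ (p - 1) + β * l ^ (p / 2 - 1) * k ^ (p / 2) = 1 →
      k₀ ≤ k) :
    p * μ₁ * k₀ ^ (p - 1) < 1 ∧ p * μ₂ * l₀ ^ (p - 1) < 1 := by
  -- basic facts about p and q
  have hN5 : (5:ℝ) ≤ (N:ℝ) := by exact_mod_cast hN
  have hN2 : (0:ℝ) < (N:ℝ) - 2 := by linarith
  have hp1 : 1 < p := by rw [hp, lt_div_iff₀ hN2]; linarith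
  have hp2 : p < 2 := by rw [hp, div_lt_iff₀ hN2]; linarith
  have hp0 : 0 < p := by linarith
  have hp1' : 0 < p - 1 := by linarith
  set q : ℝ := 2 / p - 1 with hqdef
  clear_value q
  have hq0 : 0 < q := by
    rw [hqdef, lt_sub_iff_add_lt, zero_add, lt_div_iff₀ hp0]; linarith
  have hq1 : q < 1 := by
    rw [hqdef, sub_lt_iff_lt_add, div_lt_iff₀ hp0]; linarith
  have hkey : (p - 1) * (1 + q) = 1 - q := by
    rw [hqdef]; field_simp; ring
  -- σ₀ and the basic identities
  set σ₀ : ℝ := (l₀ / k₀) ^ (p / 2) with hσ₀def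
  clear_value σ₀
  have hσ₀ : 0 < σ₀ := hσ₀def ▸ Real.rpow_pos_of_pos (div_pos hl₀ hk₀) _
  have hxp : 0 < k₀ ^ (p - 1) := Real.rpow_pos_of_pos hk₀ _
  have hyp : 0 < l₀ ^ (p - 1) := Real.rpow_pos_of_pos hl₀ _
  have hlk : l₀ ^ (p / 2) = k₀ ^ (p / 2) * σ₀ := by
    rw [hσ₀def, Real.div_rpow hl₀.le hk₀.le]
    field_simp
  have hkk : k₀ ^ (p / 2 - 1) * k₀ ^ (p / 2) = k₀ ^ (p - 1) := by
    rw [← Real.rpow_add hk₀, show p / 2 - 1 + p / 2 = p - 1 by ring]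
  have hll : l₀ ^ (p / 2 - 1) * l₀ ^ (p / 2) = l₀ ^ (p - 1) := by
    rw [← Real.rpow_add hl₀, show p / 2 - 1 + p / 2 = p - 1 by ring]
  have hX : k₀ ^ (p - 1) * (μ₁ + β * σ₀) = 1 := by
    linear_combination he₁ - β * k₀ ^ (p / 2 - 1) * hlk - β * σ₀ * hkk
  have hkl : k₀ ^ (p / 2) = l₀ ^ (p / 2) / σ₀ := by
    rw [hlk]; field_simp
  have hY : l₀ ^ (p - 1) * (μ₂ + β / σ₀) = 1 := by
    linear_combination he₂ - β * l₀ ^ (p / 2 - 1) * hkl - β / σ₀ * hll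
  have hYX : l₀ ^ (p - 1) = k₀ ^ (p - 1) * σ₀ ^ (1 - q) := by
    have h1 : σ₀ ^ (1 - q) = (l₀ / k₀) ^ (p - 1) := by
      rw [hσ₀def, ← Real.rpow_mul (div_pos hl₀ hk₀).le]
      congr 1
      rw [hqdef]; field_simp; ring
    rw [h1, Real.div_rpow hl₀.le hk₀.le]
    field_simp
  have e2 : σ₀ ^ q * σ₀ ^ (1 - q) = σ₀ := by
    rw [← Real.rpow_add hσ₀, show q + (1 - q) = 1 by ring, Real.rpow_one]
  have e3 : σ₀ ^ (q + 1) = σ₀ ^ q * σ₀ := by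
    rw [Real.rpow_add hσ₀, Real.rpow_one]
  have hF0 : μ₁ * σ₀ ^ q + β * σ₀ ^ (q + 1) - μ₂ * σ₀ - β = 0 := by
    have h2 := hX.trans hY.symm
    rw [hYX, mul_assoc] at h2
    have e1 := mul_left_cancel₀ hxp.ne' h2
    have h3 : σ₀ ^ q * (μ₁ + β * σ₀) = σ₀ ^ q * (σ₀ ^ (1 - q) * (μ₂ + β / σ₀)) := by rw [← e1]
    have h4 : σ₀ ^ q * (σ₀ ^ (1 - q) * (μ₂ + β / σ₀)) = μ₂ * σ₀ + β := by
      rw [← mul_assoc, e2]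
      field_simp
    rw [e3]
    linear_combination h3 + h4
  -- maximality of σ₀
  have hmax : ∀ σ : ℝ, 0 < σ → μ₁ * σ ^ q + β * σ ^ (q + 1) - μ₂ * σ - β = 0 → σ ≤ σ₀ := by
    intro σ hσp hFσ
    have hcpos : 0 < μ₁ + β * σ := by positivity
    set k : ℝ := (μ₁ + β * σ) ^ (-(1 / (p - 1))) with hkdef
    clear_value k
    have hkpos : 0 < k := hkdef ▸ Real.rpow_pos_of_pos hcpos _
    have hkp : k ^ (p - 1) = (μ₁ + β * σ)⁻¹ := by
      rw [hkdef, ← Real.rpow_mul hcpos.le,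
        show -(1 / (p - 1)) * (p - 1) = -1 by
          rw [neg_mul, one_div, inv_mul_cancel₀ hp1'.ne'],
        Real.rpow_neg_one]
    set l : ℝ := k * σ ^ (2 / p) with hldef
    clear_value l
    have hlpos : 0 < l := hldef ▸ mul_pos hkpos (Real.rpow_pos_of_pos hσp _)
    have hsp : (σ ^ (2 / p)) ^ (p / 2) = σ := by
      rw [← Real.rpow_mul hσp.le, show 2 / p * (p / 2) = 1 by field_simp, Real.rpow_one]
    have hlk2 : l ^ (p / 2) = k ^ (p / 2) * σ := by
      rw [hldef, Real.mul_rpow hkpos.le (Real.rpow_pos_of_pos hσp _).le, hsp]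
    have hkk2 : k ^ (p / 2 - 1) * k ^ (p / 2) = k ^ (p - 1) := by
      rw [← Real.rpow_add hkpos, show p / 2 - 1 + p / 2 = p - 1 by ring]
    have heq1 : μ₁ * k ^ (p - 1) + β * k ^ (p / 2 - 1) * l ^ (p / 2) = 1 := by
      rw [hlk2]
      have h6 : β * k ^ (p / 2 - 1) * (k ^ (p / 2) * σ) = β * k ^ (p - 1) * σ := by
        rw [← hkk2]; ring
      rw [h6, hkp]
      field_simp
    have hlp : l ^ (p - 1) = k ^ (p - 1) * σ ^ (1 - q) := by
      rw [hldef, Real.mul_rpow hkpos.le (Real.rpow_pos_of_pos hσp _).le,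
        ← Real.rpow_mul hσp.le, show 2 / p * (p - 1) = 1 - q by rw [hqdef]; field_simp; ring]
    have hll2 : l ^ (p / 2 - 1) * l ^ (p / 2) = l ^ (p - 1) := by
      rw [← Real.rpow_add hlpos, show p / 2 - 1 + p / 2 = p - 1 by ring]
    have hkl2 : k ^ (p / 2) = l ^ (p / 2) / σ := by
      rw [hlk2]; field_simp
    have e3' : σ ^ (q + 1) = σ ^ q * σ := by rw [Real.rpow_add hσp, Real.rpow_one]
    have e2' : σ ^ (1 - q) * σ ^ q = σ := by
      rw [← Real.rpow_add hσp, show 1 - q + q = 1 by ring, Real.rpow_one]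
    have h5 : μ₂ * σ + β = σ ^ q * (μ₁ + β * σ) := by
      linear_combination (-1 : ℝ) * hFσ + β * e3'
    have key' : σ ^ (1 - q) * (μ₂ * σ + β) = (μ₁ + β * σ) * σ := by
      linear_combination σ ^ (1 - q) * h5 + (μ₁ + β * σ) * e2'
    have heq2 : μ₂ * l ^ (p - 1) + β * l ^ (p / 2 - 1) * k ^ (p / 2) = 1 := by
      rw [hkl2]
      have h7 : β * l ^ (p / 2 - 1) * (l ^ (p / 2) / σ) = β * l ^ (p - 1) / σ := by
        rw [← hll2]; ring
      rw [h7, hlp, hkp]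
      field_simp
      linear_combination key'
    have hk₀k := hmin k l hkpos hlpos heq1 heq2
    have h8 : k₀ ^ (p - 1) ≤ k ^ (p - 1) := Real.rpow_le_rpow hk₀.le hk₀k (by linarith only [hp1'])
    rw [hkp] at h8
    have h9 : (μ₁ + β * σ) * k₀ ^ (p - 1) ≤ 1 := by
      have h10 := mul_le_mul_of_nonneg_left h8 hcpos.le
      rwa [mul_inv_cancel₀ hcpos.ne'] at h10
    have h11 : (μ₁ + β * σ) * k₀ ^ (p - 1) ≤ k₀ ^ (p - 1) * (μ₁ + β * σ₀) := by
      rw [hX]; exact h9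
    have h13 : σ * (β * k₀ ^ (p - 1)) ≤ σ₀ * (β * k₀ ^ (p - 1)) := by linarith only [h11]
    exact le_of_mul_le_mul_right h13 (mul_pos hβ hxp)
  -- the quantities a, b and the g-monotonicity
  have hβ₀pos : 0 < β₀ :=
    lt_of_lt_of_le (mul_pos hp1' (lt_of_lt_of_le hμ₁ (le_max_left μ₁ μ₂))) hβ₀ge
  have hμ₁β : (p - 1) * μ₁ ≤ β₀ :=
    le_trans (mul_le_mul_of_nonneg_left (le_max_left μ₁ μ₂) hp1'.le) hβ₀ge
  have hμ₂β : (p - 1) * μ₂ ≤ β₀ :=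
    le_trans (mul_le_mul_of_nonneg_left (le_max_right μ₁ μ₂) hp1'.le) hβ₀ge
  have h10 : (p - 1) * μ₁ * ((p - 1) * μ₂) ≤ β₀ * β₀ :=
    mul_le_mul hμ₁β hμ₂β (by positivity) hβ₀pos.le
  have hA : (0:ℝ) ≤ (p - 1) * μ₁ * μ₂ := by positivity
  have hcond : (p - 1) * μ₁ * μ₂ * (1 - q) ≤ (1 + q) * (β₀ * β₀) := by
    have h11 : (p - 1) * μ₁ * μ₂ * (1 - q) = (1 + q) * ((p - 1) * μ₁ * ((p - 1) * μ₂)) := by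
      rw [← hkey]; ring
    rw [h11]
    exact mul_le_mul_of_nonneg_left h10 (by linarith only [hq0])
  have hG := gmono' hq0 hA hβ₀pos hββ₀ hcond
  have hq2 : 2 / p - 2 = q - 1 := by rw [hqdef]; ring
  have hq3 : 2 / p = q + 1 := by rw [hqdef]; ring
  rw [hq2, hq3] at hβ₀eq
  have hGβ : p * (p - 1) ^ q * max (μ₁ ^ (q + 1)) (μ₂ ^ (q + 1)) <
      (p - 1) * μ₁ * μ₂ * β ^ (q - 1) + β ^ (q + 1) := by
    rw [← hβ₀eq]; exact hG
  have e4 : β ^ (q - 1) * β = β ^ q := by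
    rw [← Real.rpow_add_one hβ.ne', show q - 1 + 1 = q by ring]
  have hGβ2 : p * (p - 1) ^ q * max (μ₁ ^ (q + 1)) (μ₂ ^ (q + 1)) * β <
      (p - 1) * μ₁ * μ₂ * β ^ q + β ^ (q + 1) * β := by
    have h12 := mul_lt_mul_of_pos_right hGβ hβ
    rw [add_mul, mul_assoc ((p - 1) * μ₁ * μ₂) _ β, e4] at h12
    exact h12
  set a : ℝ := (p - 1) * μ₁ / β with hadef
  set b : ℝ := β / ((p - 1) * μ₂) with hbdef
  clear_value a b
  have ha0 : 0 < a := by rw [hadef]; exact div_pos (mul_pos hp1' hμ₁) hβ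
  have hb0 : 0 < b := by rw [hbdef]; exact div_pos hβ (mul_pos hp1' hμ₂)
  have hba : β * a = (p - 1) * μ₁ := by rw [hadef]; field_simp
  have hb2 : (p - 1) * μ₂ * b = β := by rw [hbdef]; field_simp
  have ha_form : a = (1 - q) * μ₁ / ((1 + q) * β) := by
    rw [hadef, ← hkey]
    rw [div_eq_div_iff hβ.ne' (mul_pos (by linarith only [hq0] : (0:ℝ) < 1 + q) hβ).ne']
    ring
  have hab : a < b := by
    rw [hadef, hbdef, div_lt_div_iff₀ hβ (mul_pos hp1' hμ₂)]
    nlinarith only [h10, hββ₀, hβ₀pos]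
  have hβq : 0 < β ^ q := Real.rpow_pos_of_pos hβ _
  -- F a < 0
  have h11 : a ^ q * β ^ q = (p - 1) ^ q * μ₁ ^ q := by
    rw [← Real.mul_rpow ha0.le hβ.le, mul_comm a β, hba, Real.mul_rpow hp1'.le hμ₁.le]
  have e3a : a ^ (q + 1) = a ^ q * a := by rw [Real.rpow_add ha0, Real.rpow_one]
  have e3β : β ^ (q + 1) = β ^ q * β := by rw [Real.rpow_add hβ, Real.rpow_one]
  have e3μ : μ₁ ^ (q + 1) = μ₁ ^ q * μ₁ := by rw [Real.rpow_add hμ₁, Real.rpow_one]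
  have keyA : (μ₁ * a ^ q + β * a ^ (q + 1) - μ₂ * a - β) * (β ^ q * β) =
      p * (p - 1) ^ q * μ₁ ^ (q + 1) * β - ((p - 1) * μ₁ * μ₂ * β ^ q + β ^ (q + 1) * β) := by
    linear_combination (β * β ^ q * β) * e3a + β * e3β + (-(p * (p - 1) ^ q * β)) * e3μ +
      (β * β ^ q * a ^ q - μ₂ * β ^ q) * hba + (p * μ₁ * β) * h11
  have hFa : μ₁ * a ^ q + β * a ^ (q + 1) - μ₂ * a - β < 0 := by
    have hmax1 : p * (p - 1) ^ q * μ₁ ^ (q + 1) * β ≤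
        p * (p - 1) ^ q * max (μ₁ ^ (q + 1)) (μ₂ ^ (q + 1)) * β := by
      exact mul_le_mul_of_nonneg_right (mul_le_mul_of_nonneg_left
        (le_max_left (μ₁ ^ (q + 1)) (μ₂ ^ (q + 1)))
        (mul_nonneg (by linarith only [hp0]) (Real.rpow_nonneg hp1'.le q))) hβ.le
    have hneg : p * (p - 1) ^ q * μ₁ ^ (q + 1) * β -
        ((p - 1) * μ₁ * μ₂ * β ^ q + β ^ (q + 1) * β) < 0 := by
      linarith only [hGβ2, hmax1]
    by_contra hge
    push_neg at hge
    linarith only [keyA, hneg, mul_nonneg hge (mul_pos hβq hβ).le]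
  -- F b > 0
  have e3b : b ^ (q + 1) = b ^ q * b := by rw [Real.rpow_add hb0, Real.rpow_one]
  have e3μ₂ : μ₂ ^ (q + 1) = μ₂ ^ q * μ₂ := by rw [Real.rpow_add hμ₂, Real.rpow_one]
  have h12 : b ^ q * ((p - 1) ^ q * μ₂ ^ q) = β ^ q := by
    rw [← Real.mul_rpow hp1'.le hμ₂.le, ← Real.mul_rpow hb0.le (by positivity),
      mul_comm b ((p - 1) * μ₂), hb2]
  have keyB : (μ₁ * b ^ q + β * b ^ (q + 1) - μ₂ * b - β) * ((p - 1) ^ q * μ₂ ^ q) * ((p - 1) * μ₂) =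
      ((p - 1) * μ₁ * μ₂ * β ^ q + β ^ (q + 1) * β) - p * (p - 1) ^ q * μ₂ ^ (q + 1) * β := by
    linear_combination (β * ((p - 1) ^ q * μ₂ ^ q) * ((p - 1) * μ₂)) * e3b +
      (μ₁ * (p - 1) * μ₂ + β * (p - 1) * μ₂ * b) * h12 +
      (β * β ^ q - μ₂ * ((p - 1) ^ q * μ₂ ^ q)) * hb2 + (-β) * e3β + (p * β * (p - 1) ^ q) * e3μ₂
  have hFb : 0 < μ₁ * b ^ q + β * b ^ (q + 1) - μ₂ * b - β := by
    have hmax2 : p * (p - 1) ^ q * μ₂ ^ (q + 1) * β ≤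
        p * (p - 1) ^ q * max (μ₁ ^ (q + 1)) (μ₂ ^ (q + 1)) * β := by
      exact mul_le_mul_of_nonneg_right (mul_le_mul_of_nonneg_left
        (le_max_right (μ₁ ^ (q + 1)) (μ₂ ^ (q + 1)))
        (mul_nonneg (by linarith only [hp0]) (Real.rpow_nonneg hp1'.le q))) hβ.le
    have hposR : 0 < ((p - 1) * μ₁ * μ₂ * β ^ q + β ^ (q + 1) * β) -
        p * (p - 1) ^ q * μ₂ ^ (q + 1) * β := by linarith only [hGβ2, hmax2]
    by_contra hge
    push_neg at hge
    have hmul : 0 < ((p - 1) ^ q * μ₂ ^ q) * ((p - 1) * μ₂) := by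
      have := Real.rpow_pos_of_pos hp1' q
      have := Real.rpow_pos_of_pos hμ₂ q
      positivity
    linarith only [keyB, hposR, mul_nonneg (neg_nonneg.2 hge) hmul.le]
  -- apply the core lemma
  obtain ⟨hi1, hi2⟩ := core' hq0 hq1 hμ₁ hβ ha_form hab hFa hFb hF0 hmax
  constructor
  · have hba' : β * a < β * σ₀ := mul_lt_mul_of_pos_left hi1 hβ
    rw [hba] at hba'
    have h15 := mul_lt_mul_of_pos_right hba' hxp
    have hgoal : p * μ₁ * k₀ ^ (p - 1) < k₀ ^ (p - 1) * (μ₁ + β * σ₀) := by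
      linarith only [h15]
    exact hgoal.trans_eq hX
  · have h13 : σ₀ * ((p - 1) * μ₂) < β := by
      rw [hbdef, lt_div_iff₀ (mul_pos hp1' hμ₂)] at hi2
      exact hi2
    have h14 : (p - 1) * μ₂ < β / σ₀ := (lt_div_iff₀ hσ₀).2 (by linarith only [h13])
    have h15 := mul_lt_mul_of_pos_right h14 hyp
    have hgoal : p * μ₂ * l₀ ^ (p - 1) < l₀ ^ (p - 1) * (μ₂ + β / σ₀) := by
      linarith only [h15]
    exact hgoal.trans_eq hY
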